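/- Let α ∈ PF_n(id) (i.e., αᵢ ≤ i for all i) and let dᵢ = i − αᵢ. In the probabilistic open-boundary parking model with p = 1/2, the probability that all n cars park (each car i, starting a symmetric random walk at αᵢ on {0,…,i} with spots 1,…,i−1 occupied, reaches i before 0) equals ∏_{i=1}^{n} αᵢ/i, i.e., (∏ᵢ αᵢ)/n!. -/
import Mathlib

lemma gambler_lin (N : ℕ) (w : ℕ → ℝ) (h0 : w 0 = 0)
    (hrec : ∀ s, 0 < s → s < N → w s = (1/2) * w (s+1) + (1/2) * w (s-1)) :
    ∀ s, s ≤ N → w s = s * w 1 := by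
  intro s
  induction s using Nat.twoStepInduction with
  | zero => intro _; simp [h0]
  | one => intro _; simp
  | more s ih1 ih2 =>
    intro hs
    have e1 := ih1 (by omega)
    have e2 := ih2 (by omega)
    have hr := hrec (s+1) (by omega) (by omega)
    simp only [Nat.add_sub_cancel] at hr
    push_cast at *
    linarith

/-- Open-boundary probabilistic parking with `p = 1/2`: let `α ∈ PF_n(id)`
(1-indexed: car `i` has preference `α i` with `1 ≤ α i ≤ i`), and for each car `i`
let `w i s` be the probability that a symmetric ±1 walk started at `s` on
`{0,…,i}` hits `i` before `0` (characterized by the gambler's ruin system).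
Then the probability that all cars park, `∏ᵢ w i (αᵢ)`, equals `∏ᵢ αᵢ/i`,
which equals `(∏ᵢ αᵢ)/n!`. -/
theorem stmt18 (n : ℕ) (α : Fin n → ℕ)
    (hα : ∀ i : Fin n, 1 ≤ α i ∧ α i ≤ (i : ℕ) + 1)
    (w : Fin n → ℕ → ℝ)
    (hw0 : ∀ i, w i 0 = 0) (hwi : ∀ i : Fin n, w i ((i : ℕ) + 1) = 1)
    (hrec : ∀ i : Fin n, ∀ s, 0 < s → s < (i : ℕ) + 1 →
      w i s = (1 / 2) * w i (s + 1) + (1 / 2) * w i (s - 1)) :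
    ∏ i : Fin n, w i (α i) = ∏ i : Fin n, (α i : ℝ) / ((i : ℕ) + 1 : ℝ) ∧
      ∏ i : Fin n, (α i : ℝ) / ((i : ℕ) + 1 : ℝ) =
        (∏ i : Fin n, (α i : ℝ)) / (n.factorial : ℝ) := by
  constructor
  · apply Finset.prod_congr rfl
    intro i _
    have hlin := gambler_lin ((i : ℕ) + 1) (w i) (hw0 i) (hrec i)
    have htop := hlin ((i : ℕ) + 1) le_rfl
    rw [hwi i] at htop
    have hpos : ((i : ℕ) + 1 : ℝ) ≠ 0 := by positivity
    have hw1 : w i 1 = 1 / ((i : ℕ) + 1 : ℝ) := by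
      field_simp
      push_cast at htop
      linarith
    have := hlin (α i) (hα i).2
    rw [this, hw1]
    ring
  · rw [Finset.prod_div_distrib]
    congr 1
    have : ∏ i : Fin n, ((i : ℕ) + 1) = n.factorial := by
      rw [Fin.prod_univ_eq_prod_range (fun i => i + 1)]
      exact Finset.prod_range_add_one_eq_factorial n
    rw [← this]
    push_cast
    rfl
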